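/- Let Σ be a symmetric positive definite k×k real matrix. Then the minimum of v'Σv over the unit L1-sphere {v ∈ ℝ^k : ∑_{i=1}^k |v_i| = 1} equals 1 / max_{s ∈ {-1,1}^k} (s'Σ^{-1}s). -/

import Mathlib

open MeasureTheory Matrix

/-- Largest "eigenvalue" via the Rayleigh quotient (equals the largest eigenvalue
for symmetric matrices). -/
noncomputable def lamMax {k : ℕ} (A : Matrix (Fin k) (Fin k) ℝ) : ℝ :=
  ⨆ u : {u : Fin k → ℝ // u ⬝ᵥ u = 1}, u.1 ⬝ᵥ A *ᵥ u.1

/-- Smallest "eigenvalue" via the Rayleigh quotient. -/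
noncomputable def lamMin {k : ℕ} (A : Matrix (Fin k) (Fin k) ℝ) : ℝ :=
  ⨅ u : {u : Fin k → ℝ // u ⬝ᵥ u = 1}, u.1 ⬝ᵥ A *ᵥ u.1

/-- The scatter halfspace depth of a scatter matrix `Sg` w.r.t. the probability
measure `P`, with location `T`. -/
noncomputable def HD {k : ℕ} (P : Measure (Fin k → ℝ)) (T : Fin k → ℝ)
    (Sg : Matrix (Fin k) (Fin k) ℝ) : ℝ :=
  ⨅ u : {u : Fin k → ℝ // u ⬝ᵥ u = 1},
    min (P {x | |u.1 ⬝ᵥ (x - T)| ≤ Real.sqrt (u.1 ⬝ᵥ Sg *ᵥ u.1)}).toReal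
        (P {x | Real.sqrt (u.1 ⬝ᵥ Sg *ᵥ u.1) ≤ |u.1 ⬝ᵥ (x - T)|}).toReal

/-- Matrix square root via the continuous functional calculus. -/
noncomputable def msqrt {k : ℕ} (A : Matrix (Fin k) (Fin k) ℝ) : Matrix (Fin k) (Fin k) ℝ :=
  cfc Real.sqrt A

/-- Matrix logarithm via the continuous functional calculus. -/
noncomputable def mlog {k : ℕ} (A : Matrix (Fin k) (Fin k) ℝ) : Matrix (Fin k) (Fin k) ℝ :=
  cfc Real.log A

/-- Matrix real power via the continuous functional calculus. -/
noncomputable def mpow {k : ℕ} (A : Matrix (Fin k) (Fin k) ℝ) (t : ℝ) :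
    Matrix (Fin k) (Fin k) ℝ :=
  cfc (fun x : ℝ => x ^ t) A

/-- The geodesic path from `A` to `B` in the space of positive definite matrices. -/
noncomputable def geoPath {k : ℕ} (A B : Matrix (Fin k) (Fin k) ℝ) (t : ℝ) :
    Matrix (Fin k) (Fin k) ℝ :=
  msqrt A * mpow ((msqrt A)⁻¹ * B * (msqrt A)⁻¹) t * msqrt A

/-- The harmonic path from `A` to `B`. -/
noncomputable def harmPath {k : ℕ} (A B : Matrix (Fin k) (Fin k) ℝ) (t : ℝ) :
    Matrix (Fin k) (Fin k) ℝ :=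
  ((1 - t) • A⁻¹ + t • B⁻¹)⁻¹

/-- Frobenius norm of a matrix. -/
noncomputable def frob {k : ℕ} (A : Matrix (Fin k) (Fin k) ℝ) : ℝ :=
  Real.sqrt (∑ i, ∑ j, (A i j) ^ 2)

/-- Geodesic distance on the space of positive definite matrices. -/
noncomputable def dg {k : ℕ} (A B : Matrix (Fin k) (Fin k) ℝ) : ℝ :=
  frob (mlog ((msqrt A)⁻¹ * B * (msqrt A)⁻¹))

/-- Sign vectors in `{-1,1}^k`. -/
def SignVec (k : ℕ) := {s : Fin k → ℝ // ∀ i, s i = 1 ∨ s i = -1}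

private lemma cs_aux {k : ℕ} {A : Matrix (Fin k) (Fin k) ℝ} (hA : A.PosDef) (x y : Fin k → ℝ) :
    (x ⬝ᵥ A *ᵥ y)^2 ≤ (x ⬝ᵥ A *ᵥ x) * (y ⬝ᵥ A *ᵥ y) := by
  letI G := A.toSeminormedAddCommGroup hA.posSemidef
  letI I : @InnerProductSpace ℝ (Fin k → ℝ) _ G :=
    A.toInnerProductSpace hA.posSemidef
  have h := @real_inner_mul_inner_self_le (Fin k → ℝ) G I x y
  have e : ∀ a b : Fin k → ℝ,
      (@inner ℝ _ I.toInner a b : ℝ) = a ⬝ᵥ A *ᵥ b := by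
    intro a b
    show (A *ᵥ b) ⬝ᵥ star a = a ⬝ᵥ A *ᵥ b
    rw [star_trivial, dotProduct_comm]
  rw [e, e, e] at h
  nlinarith [h]

instance signVecNonempty (k : ℕ) : Nonempty (SignVec k) :=
  ⟨⟨fun _ => 1, fun _ => Or.inl rfl⟩⟩

instance signVecFinite (k : ℕ) : Finite (SignVec k) := by
  apply Finite.of_injective (fun s : SignVec k => (fun i => s.1 i = 1 : Fin k → Prop))
  intro s t h
  apply Subtype.ext; funext i
  have h2 := congrFun h i
  rcases s.2 i with hs | hs <;> rcases t.2 i with ht | ht <;>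
    simp [hs, ht] at h2 ⊢ <;> norm_num [hs, ht] at h2


/-- the minimum of the quadratic form `v ↦ v'Σv` over the unit
`L¹`-sphere equals `1 / max_{s ∈ {-1,1}^k} s'Σ⁻¹s`. -/
theorem l1_min_quadform {k : ℕ} [NeZero k] (Sg : Matrix (Fin k) (Fin k) ℝ)
    (hSg : Sg.PosDef) :
    IsLeast ((fun v : Fin k → ℝ => v ⬝ᵥ Sg *ᵥ v) '' {v | ∑ i, |v i| = 1})
      (1 / ⨆ s : SignVec k, s.1 ⬝ᵥ Sg⁻¹ *ᵥ s.1) := by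
  have hA : Sg⁻¹.PosDef := hSg.inv
  have hApos : ∀ x : Fin k → ℝ, x ≠ 0 → 0 < x ⬝ᵥ Sg⁻¹ *ᵥ x := by
    intro x hx
    have := hA.dotProduct_mulVec_pos hx
    rwa [star_trivial] at this
  have hdet : IsUnit Sg.det := isUnit_iff_ne_zero.mpr hSg.det_pos.ne'
  have hinv_mul : ∀ x : Fin k → ℝ, Sg⁻¹ *ᵥ (Sg *ᵥ x) = x := by
    intro x
    rw [Matrix.mulVec_mulVec, Matrix.nonsing_inv_mul Sg hdet, Matrix.one_mulVec]
  have hmul_inv : ∀ x : Fin k → ℝ, Sg *ᵥ (Sg⁻¹ *ᵥ x) = x := by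
    intro x
    rw [Matrix.mulVec_mulVec, Matrix.mul_nonsing_inv Sg hdet, Matrix.one_mulVec]
  set f : SignVec k → ℝ := fun s => s.1 ⬝ᵥ Sg⁻¹ *ᵥ s.1 with hf
  -- the sup is attained
  obtain ⟨s₀, hs₀⟩ := Finite.exists_max f
  set c : ℝ := f s₀ with hcdef
  have hsvne : ∀ s : SignVec k, s.1 ≠ 0 := by
    intro s hs
    have h0 := congrFun hs ⟨0, Nat.pos_of_ne_zero (NeZero.ne k)⟩
    rcases s.2 ⟨0, Nat.pos_of_ne_zero (NeZero.ne k)⟩ with h | h <;>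
      rw [h] at h0 <;> norm_num at h0
  have hcpos : 0 < c := hApos s₀.1 (hsvne s₀)
  have hsup : (⨆ s : SignVec k, s.1 ⬝ᵥ Sg⁻¹ *ᵥ s.1) = c := by
    apply le_antisymm
    · exact ciSup_le hs₀
    · exact le_ciSup (Set.Finite.bddAbove (Set.finite_range f)) s₀
  rw [hsup]
  -- sign vector of an arbitrary vector
  have hsign : ∀ v : Fin k → ℝ, ∃ s : SignVec k, ∀ i, s.1 i * v i = |v i| := by
    intro v
    refine ⟨⟨fun i => if 0 ≤ v i then 1 else -1, fun i => by by_cases h : 0 ≤ v i <;> simp [h]⟩,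
      fun i => ?_⟩
    by_cases h : 0 ≤ v i
    · simp [h, abs_of_nonneg h]
    · simp only [h, if_false]
      rw [abs_of_neg (lt_of_not_ge h)]; ring
  constructor
  · -- membership : take v = c⁻¹ • (Sg⁻¹ *ᵥ s₀)
    set v : Fin k → ℝ := c⁻¹ • (Sg⁻¹ *ᵥ s₀.1) with hv
    have hqv : v ⬝ᵥ Sg *ᵥ v = 1 / c := by
      rw [hv, smul_dotProduct, Matrix.mulVec_smul, dotProduct_smul, hmul_inv,
        dotProduct_comm]
      have : s₀.1 ⬝ᵥ Sg⁻¹ *ᵥ s₀.1 = c := rfl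
      rw [this]
      simp only [smul_eq_mul]
      field_simp
    have hdots : s₀.1 ⬝ᵥ v = 1 := by
      rw [hv, dotProduct_smul]
      have : s₀.1 ⬝ᵥ Sg⁻¹ *ᵥ s₀.1 = c := rfl
      rw [this, smul_eq_mul, inv_mul_cancel₀ hcpos.ne']
    have hlow : (1 : ℝ) ≤ ∑ i, |v i| := by
      rw [← hdots]
      apply Finset.sum_le_sum
      intro i _
      calc s₀.1 i * v i ≤ |s₀.1 i * v i| := le_abs_self _
        _ = |v i| := by rw [abs_mul]; rcases s₀.2 i with h | h <;> rw [h] <;> norm_num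
    have hhigh : ∑ i, |v i| ≤ 1 := by
      obtain ⟨s', hs'⟩ := hsign v
      have hsum : ∑ i, |v i| = s'.1 ⬝ᵥ v := by
        rw [dotProduct]
        exact (Finset.sum_congr rfl fun i _ => (hs' i).symm)
      have hdot2 : s'.1 ⬝ᵥ v = c⁻¹ * (s'.1 ⬝ᵥ Sg⁻¹ *ᵥ s₀.1) := by
        rw [hv, dotProduct_smul, smul_eq_mul]
      have hcs := cs_aux hA s'.1 s₀.1
      have hmax : s'.1 ⬝ᵥ Sg⁻¹ *ᵥ s'.1 ≤ c := hs₀ s'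
      have hc2 : s₀.1 ⬝ᵥ Sg⁻¹ *ᵥ s₀.1 = c := rfl
      rw [hc2] at hcs
      have hb : s'.1 ⬝ᵥ Sg⁻¹ *ᵥ s₀.1 ≤ c := by
        nlinarith [abs_le_of_sq_le_sq' (by nlinarith : (s'.1 ⬝ᵥ Sg⁻¹ *ᵥ s₀.1)^2 ≤ c^2) hcpos.le]
      rw [hsum, hdot2]
      calc c⁻¹ * (s'.1 ⬝ᵥ Sg⁻¹ *ᵥ s₀.1) ≤ c⁻¹ * c := by
            apply mul_le_mul_of_nonneg_left hb (inv_nonneg.mpr hcpos.le)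
        _ = 1 := inv_mul_cancel₀ hcpos.ne'
    exact ⟨v, le_antisymm hhigh hlow, hqv⟩
  · -- lower bound
    rintro y ⟨v, hv, rfl⟩
    simp only [Set.mem_setOf_eq] at hv
    obtain ⟨s', hs'⟩ := hsign v
    have h1 : s'.1 ⬝ᵥ v = 1 := by
      rw [dotProduct]
      exact (Finset.sum_congr rfl fun i _ => hs' i).trans hv
    have h2 : s'.1 ⬝ᵥ Sg⁻¹ *ᵥ (Sg *ᵥ v) = 1 := by rw [hinv_mul, h1]
    have hcs := cs_aux hA s'.1 (Sg *ᵥ v)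
    rw [h2] at hcs
    have h3 : (Sg *ᵥ v) ⬝ᵥ Sg⁻¹ *ᵥ (Sg *ᵥ v) = v ⬝ᵥ Sg *ᵥ v := by
      rw [hinv_mul, dotProduct_comm]
    rw [h3] at hcs
    have hmax : s'.1 ⬝ᵥ Sg⁻¹ *ᵥ s'.1 ≤ c := hs₀ s'
    have hvq : 0 < v ⬝ᵥ Sg *ᵥ v := by
      have hvne : v ≠ 0 := by
        intro h0
        rw [h0] at hv
        simp at hv
      have := hSg.dotProduct_mulVec_pos hvne
      rwa [star_trivial] at this
    rw [div_le_iff₀ hcpos]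
    nlinarith
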